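/- The inventory function Φ is non-increasing on [1, ∞); moreover, if 1 ≤ π < π' and Φ(π) > 0, then Φ(π') < Φ(π). -/

import Mathlib

open Finset MeasureTheory

noncomputable section

/-- A discharging vector `δ` is feasible for demand profile `d` (with capacity `c`
and per-slot limit `dmax`). -/
def Feasible {T : ℕ} (c dmax : ℝ) (d δ : Fin T → ℝ) : Prop :=
  (∑ t, δ t) ≤ c ∧ ∀ t, 0 ≤ δ t ∧ δ t ≤ min dmax (d t)

/-- Peak-demand reduction `R(d, δ)`. -/
noncomputable def Red {T : ℕ} (d δ : Fin T → ℝ) : ℝ :=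
  (⨆ t, d t) - ⨆ t, (d t - δ t)

/-- Offline optimal peak-demand reduction `σ(d)`. -/
noncomputable def offOpt {T : ℕ} (c dmax : ℝ) (d : Fin T → ℝ) : ℝ :=
  sSup {r | ∃ δ : Fin T → ℝ, Feasible c dmax d δ ∧ r = Red d δ}

/-- Prefix maximum `max_{k ∈ [t]} d_k`. -/
noncomputable def prefMax {T : ℕ} (d : Fin T → ℝ) (t : Fin T) : ℝ :=
  ⨆ k : {k : Fin T // k ≤ t}, d k.1

/-- The uncertainty set `D`: all profiles with entries in `[dlo, dhi]`. -/
def inD {T : ℕ} (dlo dhi : ℝ) (d : Fin T → ℝ) : Prop :=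
  ∀ t, dlo ≤ d t ∧ d t ≤ dhi

/-- Reference profile `d^t`: observed demands up to slot `t`, lowest demand `dlo` afterwards. -/
def ref {T : ℕ} (dlo : ℝ) (d : Fin T → ℝ) (t : Fin T) : Fin T → ℝ :=
  fun k => if k ≤ t then d k else dlo

/-- Output of `pCR-PRM(π)` at slot `t`:
`δ_t(π, d) = [d_t − max_{k∈[t]} d_k + σ(d^t)/π]⁺`. -/
noncomputable def pcr {T : ℕ} (c dmax dlo : ℝ) (π : ℝ) (d : Fin T → ℝ) (t : Fin T) : ℝ :=
  max (d t - prefMax d t + offOpt c dmax (ref dlo d t) / π) 0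

/-- Inventory function `Φ(π) = sup_{d ∈ D} ∑_t δ_t(π, d)`. -/
noncomputable def Phi (T : ℕ) (c dmax dlo dhi : ℝ) (π : ℝ) : ℝ :=
  sSup {s | ∃ d : Fin T → ℝ, inD dlo dhi d ∧ s = ∑ t, pcr c dmax dlo π d t}

section Aux

variable {T : ℕ}

lemma bdd_range {α : Type*} [Finite α] (f : α → ℝ) : BddAbove (Set.range f) :=
  (Set.finite_range f).bddAbove

lemma red_le_dmax (hT : 0 < T) {dmax : ℝ} (d δ : Fin T → ℝ)
    (hδ : ∀ t, δ t ≤ dmax) : Red d δ ≤ dmax := by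
  have hne : Nonempty (Fin T) := ⟨⟨0, hT⟩⟩
  have h : (⨆ t, d t) ≤ (⨆ t, (d t - δ t)) + dmax := by
    refine ciSup_le fun t => ?_
    have h1 := le_ciSup (bdd_range fun t => d t - δ t) t
    have h2 := hδ t
    linarith
  unfold Red
  linarith

lemma offOpt_bddAbove (hT : 0 < T) {c dmax : ℝ} (d : Fin T → ℝ) :
    ∀ r ∈ {r | ∃ δ : Fin T → ℝ, Feasible c dmax d δ ∧ r = Red d δ}, r ≤ dmax := by
  rintro r ⟨δ, hf, rfl⟩
  exact red_le_dmax hT d δ fun t => (hf.2 t).2.trans (min_le_left _ _)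

lemma offOpt_nonneg (hT : 0 < T) {c dmax : ℝ} (hc : 0 ≤ c) (hdmax : 0 ≤ dmax)
    (d : Fin T → ℝ) (hd : ∀ t, 0 ≤ d t) : 0 ≤ offOpt c dmax d := by
  apply le_csSup ⟨dmax, fun r hr => offOpt_bddAbove hT d r hr⟩
  refine ⟨0, ⟨?_, ?_⟩, by simp [Red]⟩
  · simpa [Feasible] using hc
  · intro t
    exact ⟨le_refl 0, le_min hdmax (hd t)⟩

lemma offOpt_le_dmax (hT : 0 < T) {c dmax : ℝ} (hdmax : 0 ≤ dmax) (d : Fin T → ℝ) :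
    offOpt c dmax d ≤ dmax :=
  Real.sSup_le (offOpt_bddAbove hT d) hdmax

lemma le_prefMax (d : Fin T → ℝ) (t : Fin T) : d t ≤ prefMax d t :=
  le_ciSup (bdd_range fun k : {k : Fin T // k ≤ t} => d k.1) ⟨t, le_refl t⟩

lemma ref_nonneg {dlo : ℝ} (hdlo : 0 ≤ dlo) (d : Fin T → ℝ) (t : Fin T)
    (hd : ∀ k, dlo ≤ d k) : ∀ k, 0 ≤ ref dlo d t k := by
  intro k
  unfold ref
  split
  · exact hdlo.trans (hd k)
  · exact hdlo

lemma pcr_nonneg {c dmax dlo π : ℝ} (d : Fin T → ℝ) (t : Fin T) :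
    0 ≤ pcr c dmax dlo π d t := le_max_right _ _

lemma pcr_le_dmax (hT : 0 < T) {c dmax dlo π : ℝ} (hc : 0 ≤ c) (hdmax : 0 ≤ dmax)
    (hdlo : 0 ≤ dlo) (hπ : 1 ≤ π) (d : Fin T → ℝ) (hd : ∀ k, dlo ≤ d k) (t : Fin T) :
    pcr c dmax dlo π d t ≤ dmax := by
  have hσ0 : 0 ≤ offOpt c dmax (ref dlo d t) :=
    offOpt_nonneg hT hc hdmax _ (ref_nonneg hdlo d t hd)
  have hσd : offOpt c dmax (ref dlo d t) ≤ dmax := offOpt_le_dmax hT hdmax _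
  have hπ0 : (0:ℝ) < π := lt_of_lt_of_le one_pos hπ
  have hdiv : offOpt c dmax (ref dlo d t) / π ≤ offOpt c dmax (ref dlo d t) := by
    rw [div_le_iff₀ hπ0]
    nlinarith
  have ha : d t - prefMax d t ≤ 0 := by
    have := le_prefMax d t; linarith
  unfold pcr
  apply max_le _ hdmax
  linarith

lemma pcr_contract (hT : 0 < T) {c dmax dlo π π' : ℝ} (hc : 0 ≤ c) (hdmax : 0 ≤ dmax)
    (hdlo : 0 ≤ dlo) (hπ : 1 ≤ π) (hππ' : π ≤ π') (d : Fin T → ℝ) (hd : ∀ k, dlo ≤ d k)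
    (t : Fin T) :
    pcr c dmax dlo π' d t ≤ (π / π') * pcr c dmax dlo π d t := by
  have hπ0 : (0:ℝ) < π := lt_of_lt_of_le one_pos hπ
  have hπ'0 : (0:ℝ) < π' := hπ0.trans_le hππ'
  set a := d t - prefMax d t with ha_def
  set σ := offOpt c dmax (ref dlo d t) with hσ_def
  have hσ0 : 0 ≤ σ := offOpt_nonneg hT hc hdmax _ (ref_nonneg hdlo d t hd)
  have ha : a ≤ 0 := by have := le_prefMax d t; rw [ha_def]; linarith
  have hdiv : σ / π' ≤ σ / π := div_le_div_of_nonneg_left hσ0 hπ0 hππ' |>.trans_eq rfl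
  have hr0 : 0 ≤ π / π' := div_nonneg hπ0.le hπ'0.le
  have hr1 : π / π' ≤ 1 := (div_le_one hπ'0).mpr hππ'
  have hkey : (π / π') * (σ / π) = σ / π' := by
    field_simp
  show max (a + σ / π') 0 ≤ (π / π') * max (a + σ / π) 0
  rcases le_or_gt (a + σ / π) 0 with h | h
  · rw [max_eq_right h, mul_zero, max_eq_right]
    linarith
  · rw [max_eq_left h.le]
    apply max_le
    · nlinarith
    · positivity

lemma PhiSet_nonempty (T : ℕ) (c dmax dlo dhi π : ℝ) (hbd : dlo ≤ dhi) :
    Set.Nonempty {s | ∃ d : Fin T → ℝ, inD dlo dhi d ∧ s = ∑ t, pcr c dmax dlo π d t} :=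
  ⟨_, fun _ => dlo, fun _ => ⟨le_refl dlo, hbd⟩, rfl⟩

lemma PhiSet_bdd (hT : 0 < T) (c dmax dlo dhi π : ℝ) (hc : 0 ≤ c) (hdmax : 0 ≤ dmax)
    (hdlo : 0 ≤ dlo) (hπ : 1 ≤ π) :
    ∀ s ∈ {s | ∃ d : Fin T → ℝ, inD dlo dhi d ∧ s = ∑ t, pcr c dmax dlo π d t},
      s ≤ T * dmax := by
  rintro s ⟨d, hd, rfl⟩
  calc ∑ t, pcr c dmax dlo π d t
      ≤ ∑ _t : Fin T, dmax :=
        Finset.sum_le_sum fun t _ =>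
          pcr_le_dmax hT hc hdmax hdlo hπ d (fun k => (hd k).1) t
    _ = T * dmax := by simp [mul_comm]

lemma Phi_nonneg (hT : 0 < T) (c dmax dlo dhi π : ℝ) (hc : 0 ≤ c) (hdmax : 0 ≤ dmax)
    (hdlo : 0 ≤ dlo) (hbd : dlo ≤ dhi) (hπ : 1 ≤ π) :
    0 ≤ Phi T c dmax dlo dhi π := by
  have hmem := PhiSet_nonempty T c dmax dlo dhi π hbd
  obtain ⟨s, hs⟩ := hmem
  have hs0 : 0 ≤ s := by
    obtain ⟨d, _, rfl⟩ := hs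
    exact Finset.sum_nonneg fun t _ => pcr_nonneg d t
  exact hs0.trans
    (le_csSup ⟨T * dmax, fun x hx => PhiSet_bdd hT c dmax dlo dhi π hc hdmax hdlo hπ x hx⟩ hs)

lemma Phi_contract (hT : 0 < T) (c dmax dlo dhi π π' : ℝ) (hc : 0 ≤ c) (hdmax : 0 ≤ dmax)
    (hdlo : 0 ≤ dlo) (hbd : dlo ≤ dhi) (hπ : 1 ≤ π) (hππ' : π ≤ π') :
    Phi T c dmax dlo dhi π' ≤ (π / π') * Phi T c dmax dlo dhi π := by
  have hπ0 : (0:ℝ) < π := lt_of_lt_of_le one_pos hπ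
  have hπ'0 : (0:ℝ) < π' := hπ0.trans_le hππ'
  have hr0 : 0 ≤ π / π' := div_nonneg hπ0.le hπ'0.le
  have hΦ0 := Phi_nonneg hT c dmax dlo dhi π hc hdmax hdlo hbd hπ
  apply Real.sSup_le _ (mul_nonneg hr0 hΦ0)
  rintro s ⟨d, hd, rfl⟩
  calc ∑ t, pcr c dmax dlo π' d t
      ≤ ∑ t, (π / π') * pcr c dmax dlo π d t :=
        Finset.sum_le_sum fun t _ =>
          pcr_contract hT hc hdmax hdlo hπ hππ' d (fun k => (hd k).1) t
    _ = (π / π') * ∑ t, pcr c dmax dlo π d t := by rw [Finset.mul_sum]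
    _ ≤ (π / π') * Phi T c dmax dlo dhi π := by
        apply mul_le_mul_of_nonneg_left _ hr0
        exact le_csSup ⟨T * dmax, fun x hx =>
          PhiSet_bdd hT c dmax dlo dhi π hc hdmax hdlo hπ x hx⟩ ⟨d, hd, rfl⟩

end Aux

/-- `Φ` is non-increasing on `[1, ∞)` and strictly decreasing where positive. -/
theorem stmt9 (T : ℕ) (hT : 0 < T) (c dmax dlo dhi : ℝ)
    (hc : 0 < c) (hdmax : 0 < dmax) (hdlo : 0 < dlo) (hbd : dlo ≤ dhi) :
    (∀ π π' : ℝ, 1 ≤ π → π ≤ π' →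
      Phi T c dmax dlo dhi π' ≤ Phi T c dmax dlo dhi π) ∧
    (∀ π π' : ℝ, 1 ≤ π → π < π' → 0 < Phi T c dmax dlo dhi π →
      Phi T c dmax dlo dhi π' < Phi T c dmax dlo dhi π) := by
  constructor
  · intro π π' hπ hππ'
    have h := Phi_contract hT c dmax dlo dhi π π' hc.le hdmax.le hdlo.le hbd hπ hππ'
    have hΦ0 := Phi_nonneg hT c dmax dlo dhi π hc.le hdmax.le hdlo.le hbd hπ
    have hπ0 : (0:ℝ) < π := lt_of_lt_of_le one_pos hπ
    have hπ'0 : (0:ℝ) < π' := hπ0.trans_le hππ'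
    have hr1 : π / π' ≤ 1 := (div_le_one hπ'0).mpr hππ'
    nlinarith
  · intro π π' hπ hππ' hpos
    have h := Phi_contract hT c dmax dlo dhi π π' hc.le hdmax.le hdlo.le hbd hπ hππ'.le
    have hπ0 : (0:ℝ) < π := lt_of_lt_of_le one_pos hπ
    have hπ'0 : (0:ℝ) < π' := hπ0.trans hππ'
    have hr1 : π / π' < 1 := (div_lt_one hπ'0).mpr hππ'
    nlinarith
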